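/- Let 1 ≤ k ≤ n be integers and let σ_k(λ) := e_k(λ)/C(n,k) denote the normalized k-th elementary symmetric polynomial of λ = (λ₁, …, λ_n), where e_k is the k-th elementary symmetric polynomial and C(n,k) the binomial coefficient, so that σ_k(1,…,1) = 1. Then for every λ ∈ ℝⁿ with all entries strictly positive: Σ_{l=1}^{n} ∂σ_k/∂λ_l (λ) ≥ k σ_k(λ)^{(k−1)/k}. -/

import Mathlib

open Finset Polynomial


/-- AM-GM in power form over a finset. -/
lemma my_amgm {α : Type*} (t : Finset α) (g : α → ℝ) (hg : ∀ a ∈ t, 0 ≤ g a) :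
    (∏ a ∈ t, g a) * (t.card : ℝ) ^ t.card ≤ (∑ a ∈ t, g a) ^ t.card := by
  rcases Finset.eq_empty_or_nonempty t with rfl | ht
  · simp
  have hc : 0 < (t.card : ℝ) := by exact_mod_cast Finset.card_pos.2 ht
  have h := Real.geom_mean_le_arith_mean_weighted t (fun _ => 1 / t.card) g
    (fun i _ => by positivity) (by rw [Finset.sum_const, nsmul_eq_mul]; field_simp) hg
  have hP : 0 ≤ ∏ a ∈ t, g a := Finset.prod_nonneg hg
  have hprod : ∏ a ∈ t, g a ^ (1 / (t.card : ℝ)) = (∏ a ∈ t, g a) ^ (1 / (t.card : ℝ)) :=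
    (Real.finset_prod_rpow t g hg _)
  rw [hprod] at h
  have h2 : ((∏ a ∈ t, g a) ^ (1 / (t.card : ℝ))) ^ t.card ≤ (∑ a ∈ t, (1 / (t.card : ℝ)) * g a) ^ t.card :=
    pow_le_pow_left₀ (Real.rpow_nonneg hP _) h _
  rw [← Real.rpow_natCast ((∏ a ∈ t, g a) ^ (1 / (t.card : ℝ))) t.card, ← Real.rpow_mul hP,
    one_div, inv_mul_cancel₀ hc.ne', Real.rpow_one, ← Finset.mul_sum] at h2
  calc (∏ a ∈ t, g a) * (t.card : ℝ) ^ t.card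
      ≤ (((t.card:ℝ))⁻¹ * ∑ a ∈ t, g a) ^ t.card * (t.card : ℝ) ^ t.card := by
        apply mul_le_mul_of_nonneg_right _ (by positivity)
        simpa using h2
    _ = (∑ a ∈ t, g a) ^ t.card := by
        rw [mul_pow, mul_comm, ← mul_assoc, ← mul_pow, mul_inv_cancel₀ hc.ne', one_pow, one_mul]



lemma my_rep (s : Multiset ℝ) {n : ℕ} (hn : Multiset.card s = n) :
    ∃ f : Fin n → ℝ, s = (univ : Finset (Fin n)).val.map f := by
  subst hn
  refine ⟨fun i => s.toList.get (Fin.cast (Multiset.length_toList s).symm i), ?_⟩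
  conv_lhs => rw [← Multiset.coe_toList s]
  have huv : (univ : Finset (Fin (Multiset.card s))).val = ↑(List.finRange (Multiset.card s)) := rfl
  rw [huv]
  rw [Multiset.map_coe]
  congr 1
  conv_lhs => rw [← List.map_get_finRange s.toList]
  have : List.finRange s.toList.length = (List.finRange (Multiset.card s)).map (Fin.cast (Multiset.length_toList s).symm) := by
    apply List.ext_getElem <;> simp
  rw [this, List.map_map]
  rfl

lemma my_esymm_eq {n : ℕ} (f : Fin n → ℝ) (m : ℕ) :
    ((univ : Finset (Fin n)).val.map f).esymm m
      = ∑ A ∈ powersetCard m (univ : Finset (Fin n)), ∏ i ∈ A, f i :=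
  Finset.esymm_map_val f univ m

lemma my_esymm_pos (s : Multiset ℝ) (h : ∀ x ∈ s, 0 < x) {m : ℕ} (hm : m ≤ Multiset.card s) :
    0 < s.esymm m := by
  obtain ⟨f, hf0⟩ := my_rep s rfl
  have hf : ∀ i, 0 < f i := fun i => h _ (hf0 ▸ Multiset.mem_map_of_mem f (Finset.mem_univ_val i))
  rw [hf0, my_esymm_eq]
  apply Finset.sum_pos
  · exact fun A _ => Finset.prod_pos fun i _ => hf i
  · apply Finset.powersetCard_nonempty.2
    simpa using hm

lemma my_prod_erase {n : ℕ} (f : Fin n → ℝ) :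
    ∏ i : Fin n, ∏ j ∈ univ.erase i, f j = (∏ j : Fin n, f j) ^ (n - 1) := by
  rw [Finset.prod_comm' (t' := univ) (s' := fun j => univ.erase j)
    (by intro x y; simp [ne_comm, eq_comm])]
  rw [← Finset.prod_pow]
  exact Finset.prod_congr rfl fun j _ => by
    rw [Finset.prod_const, Finset.card_erase_of_mem (mem_univ j), Finset.card_univ, Fintype.card_fin]

lemma my_powersetCard_pred {n : ℕ} (hn : 1 ≤ n) :
    powersetCard (n-1) (univ : Finset (Fin n)) = univ.image (fun i => univ.erase i) := by
  ext A
  simp only [mem_powersetCard_univ, mem_image, mem_univ, true_and]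
  constructor
  · intro hA
    have hcompl : Aᶜ.card = 1 := by
      rw [Finset.card_compl, hA, Fintype.card_fin]; omega
    obtain ⟨i, hi⟩ := Finset.card_eq_one.1 hcompl
    refine ⟨i, ?_⟩
    rw [← compl_compl A, hi, Finset.compl_singleton]
  · rintro ⟨i, rfl⟩
    rw [Finset.card_erase_of_mem (mem_univ i), Finset.card_univ, Fintype.card_fin]

lemma my_erase_inj {n : ℕ} : Function.Injective (fun i : Fin n => (univ : Finset (Fin n)).erase i) := by
  intro i j hij
  by_contra hne
  have : i ∈ univ.erase j := Finset.mem_erase.2 ⟨hne, mem_univ i⟩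
  simp only [] at hij
  rw [← hij] at this
  exact (Finset.mem_erase.1 this).1 rfl

lemma my_base (k : ℕ) (hk : 1 ≤ k) (s : Multiset ℝ) (hcard : Multiset.card s = k)
    (hpos : ∀ x ∈ s, 0 < x) :
    (s.esymm k / (k.choose k : ℝ)) ^ (k-1) ≤ (s.esymm (k-1) / (k.choose (k-1) : ℝ)) ^ k := by
  obtain ⟨f, rfl⟩ := my_rep s hcard
  have hf : ∀ i, 0 < f i := fun i => hpos _ (Multiset.mem_map_of_mem f (Finset.mem_univ_val i))
  have hcu : (univ : Finset (Fin k)).card = k := by simp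
  have hek : ((univ : Finset (Fin k)).val.map f).esymm k = ∏ i : Fin k, f i := by
    have hpp : powersetCard k (univ : Finset (Fin k)) = {univ} := by
      simpa using Finset.powersetCard_self (univ : Finset (Fin k))
    rw [my_esymm_eq, hpp, Finset.sum_singleton]
  have hek1 : ((univ : Finset (Fin k)).val.map f).esymm (k-1)
      = ∑ i : Fin k, ∏ j ∈ univ.erase i, f j := by
    rw [my_esymm_eq, my_powersetCard_pred hk, Finset.sum_image
      (fun i _ j _ h => my_erase_inj h)]
  rw [hek, hek1, Nat.choose_self]
  have hch : (k.choose (k-1) : ℝ) = k := by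
    norm_cast
    rw [Nat.choose_symm hk, Nat.choose_one_right]
  rw [hch, Nat.cast_one, div_one, div_pow]
  rw [le_div_iff₀ (by positivity)]
  have := my_amgm (univ : Finset (Fin k)) (fun i => ∏ j ∈ univ.erase i, f j)
    (fun i _ => Finset.prod_nonneg fun j _ => (hf j).le)
  rw [hcu, my_prod_erase] at this
  exact this

lemma my_esymm_nonneg (s : Multiset ℝ) (h : ∀ x ∈ s, 0 ≤ x) (m : ℕ) : 0 ≤ s.esymm m := by
  apply Multiset.sum_nonneg
  intro x hx
  obtain ⟨t, ht, rfl⟩ := Multiset.mem_map.1 hx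
  exact Multiset.prod_nonneg fun a ha =>
    h a (Multiset.mem_of_le (Multiset.mem_powersetCard.1 ht).1 ha)


lemma my_step (n : ℕ) (s : Multiset ℝ) (hcard : Multiset.card s = n + 1)
    (hpos : ∀ x ∈ s, 0 < x) :
    ∃ t : Multiset ℝ, Multiset.card t = n ∧ (∀ x ∈ t, 0 < x) ∧
      ∀ m ≤ n, s.esymm m / (((n+1).choose m : ℕ) : ℝ) = t.esymm m / ((n.choose m : ℕ) : ℝ) := by
  set Q : ℝ[X] := (s.map (fun a => X + C a)).prod with hQ
  have hmon : ∀ p ∈ s.map (fun a : ℝ => X + C a), p.Monic := by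
    intro p hp; obtain ⟨a, _, rfl⟩ := Multiset.mem_map.1 hp; exact monic_X_add_C a
  have hQdeg : Q.natDegree = n + 1 := by
    rw [hQ, Polynomial.natDegree_multiset_prod_of_monic _ hmon, Multiset.map_map]
    simp only [Function.comp, natDegree_X_add_C]
    rw [Multiset.map_const', Multiset.sum_replicate, smul_eq_mul, mul_one, hcard]
  have hQcoeff : ∀ j, j ≤ n + 1 → Q.coeff j = s.esymm (n + 1 - j) := by
    intro j hj
    rw [hQ, Multiset.prod_X_add_C_coeff s (by omega : j ≤ Multiset.card s), hcard]
  have hQroots : Q.roots = s.map (fun a => -a) := by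
    have h2 : Q = ((s.map (fun a : ℝ => -a)).map (fun a => X - C a)).prod := by
      rw [Multiset.map_map]
      exact congrArg _ (Multiset.map_congr rfl fun a _ => by simp [sub_neg_eq_add])
    rw [h2, roots_multiset_prod_X_sub_C]
  set D : ℝ[X] := derivative Q with hD
  have hDcoeff : ∀ j, D.coeff j = Q.coeff (j + 1) * (j + 1) := fun j => coeff_derivative Q j
  have hDn : D.coeff n = (n : ℝ) + 1 := by
    have he0 : s.esymm 0 = 1 := by simp [Multiset.esymm]
    rw [hDcoeff, hQcoeff (n+1) le_rfl, Nat.sub_self, he0, one_mul]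
  have hDne : D ≠ 0 := by
    intro h0
    rw [h0, coeff_zero] at hDn
    have : (0:ℝ) < (n:ℝ) + 1 := by positivity
    linarith
  have hDdeg : D.natDegree = n := by
    refine le_antisymm ?_ (le_natDegree_of_ne_zero (by rw [hDn]; positivity))
    have h5 := natDegree_derivative_le Q
    rw [← hD] at h5
    omega
  have hDroots_card : Multiset.card D.roots = n := by
    refine le_antisymm (hDdeg ▸ D.card_roots') ?_
    have h1 := Q.card_roots_le_derivative
    rw [hQroots, Multiset.card_map, hcard, ← hD] at h1
    omega
  have hQcoeff_nonneg : ∀ j, 0 ≤ Q.coeff j := by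
    intro j
    rcases le_or_gt j (n+1) with hj | hj
    · rw [hQcoeff j hj]
      exact my_esymm_nonneg s (fun x hx => (hpos x hx).le) _
    · rw [coeff_eq_zero_of_natDegree_lt (by omega)]
  have heval : ∀ x : ℝ, 0 ≤ x → 0 < D.eval x := by
    intro x hx
    rw [eval_eq_sum_range, hDdeg]
    apply Finset.sum_pos'
    · intro j _
      have := hQcoeff_nonneg (j+1)
      rw [hDcoeff]
      positivity
    · refine ⟨0, Finset.mem_range.2 (by omega), ?_⟩
      have h7 : 0 < s.esymm n := my_esymm_pos s hpos (by omega)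
      rw [hDcoeff]
      simp only [pow_zero, mul_one, zero_add]
      rw [hQcoeff 1 (by omega), (by omega : n + 1 - 1 = n)]
      positivity
  have hroots_neg : ∀ y ∈ D.roots, y < 0 := by
    intro y hy
    by_contra hge
    push_neg at hge
    exact absurd ((mem_roots hDne).1 hy) (heval y hge).ne'
  refine ⟨D.roots.map (fun a => -a), by rw [Multiset.card_map, hDroots_card], ?_, ?_⟩
  · intro x hx
    obtain ⟨y, hy, rfl⟩ := Multiset.mem_map.1 hx
    linarith [hroots_neg y hy]
  set t := D.roots.map (fun a : ℝ => -a) with ht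
  have htcard : Multiset.card t = n := by rw [ht, Multiset.card_map, hDroots_card]
  have hlead : D.leadingCoeff = (n:ℝ) + 1 := by rw [Polynomial.leadingCoeff, hDdeg, hDn]
  have hfact : D = C ((n:ℝ) + 1) * (t.map (fun a => X + C a)).prod := by
    rw [← hlead]
    conv_lhs => rw [← C_leadingCoeff_mul_prod_multiset_X_sub_C (by rw [hDroots_card, hDdeg] : Multiset.card D.roots = D.natDegree)]
    congr 1
    rw [ht, Multiset.map_map]
    exact congrArg _ (Multiset.map_congr rfl fun a _ => by simp [sub_eq_add_neg]).symm
  have hrel : ∀ m, m ≤ n → ((n:ℝ) + 1) * t.esymm m = (((n - m : ℕ) : ℝ) + 1) * s.esymm m := by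
    intro m hm
    have hc := congrArg (fun p : ℝ[X] => p.coeff (n - m)) hfact
    simp only [coeff_C_mul] at hc
    rw [Multiset.prod_X_add_C_coeff t (by rw [htcard]; omega)] at hc
    rw [htcard, (by omega : n - (n - m) = m)] at hc
    rw [hDcoeff, hQcoeff (n - m + 1) (by omega), (by omega : n + 1 - (n - m + 1) = m)] at hc
    rw [← hc]
    ring
  intro m hm
  have hnat : (n+1).choose m * (n - m + 1) = (n+1) * n.choose m := by
    have h1 : (n+1).choose m = (n+1).choose (n+1-m) := (Nat.choose_symm (by omega)).symm
    have h2 : n.choose m = n.choose (n-m) := (Nat.choose_symm (by omega)).symm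
    rw [h1, h2, (by omega : n + 1 - m = (n - m) + 1), ← Nat.add_one_mul_choose_eq]
  have hnatR : ((n:ℝ) + 1) * (n.choose m : ℝ) = ((n+1).choose m : ℝ) * (((n - m : ℕ) : ℝ) + 1) := by
    have hc2 := congrArg (fun x : ℕ => (x : ℝ)) hnat
    push_cast at hc2
    linarith
  have hc1 : ((((n+1).choose m : ℕ)) : ℝ) ≠ 0 := by
    exact_mod_cast (Nat.choose_pos (by omega : m ≤ n + 1)).ne'
  have hc0 : (((n.choose m : ℕ)) : ℝ) ≠ 0 := by
    exact_mod_cast (Nat.choose_pos hm).ne'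
  have hN : ((n:ℝ) + 1) ≠ 0 := by positivity
  rw [div_eq_div_iff hc1 hc0]
  have hg : ((n:ℝ)+1) * (s.esymm m * ((n.choose m : ℕ) : ℝ)) = ((n:ℝ)+1) * (t.esymm m * (((n+1).choose m : ℕ) : ℝ)) := by
    linear_combination (s.esymm m) * hnatR + (((n+1).choose m : ℕ) : ℝ) * (hrel m hm).symm
  exact mul_left_cancel₀ hN hg

lemma my_maclaurin (k : ℕ) (hk : 1 ≤ k) : ∀ n : ℕ, k ≤ n → ∀ s : Multiset ℝ,
    Multiset.card s = n → (∀ x ∈ s, 0 < x) →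
    (s.esymm k / (n.choose k : ℝ)) ^ (k-1) ≤ (s.esymm (k-1) / (n.choose (k-1) : ℝ)) ^ k := by
  refine Nat.le_induction ?_ ?_
  · intro s hcard hpos
    exact my_base k hk s hcard hpos
  · intro n hn ih s hcard hpos
    obtain ⟨t, htc, htp, hs⟩ := my_step n s hcard hpos
    rw [hs k (by omega), hs (k-1) (by omega)]
    exact ih t htc htp

lemma my_maclaurin' (k : ℕ) (hk : 1 ≤ k) (n : ℕ) (hkn : k ≤ n) (s : Multiset ℝ)
    (hcard : Multiset.card s = n) (hpos : ∀ x ∈ s, 0 < x) :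
    (s.esymm k / (n.choose k : ℝ)) ^ (k-1) ≤ (s.esymm (k-1) / (n.choose (k-1) : ℝ)) ^ k :=
  my_maclaurin k hk n hkn s hcard hpos

lemma my_sum_erase {n k : ℕ} (hk : 1 ≤ k) (hkn : k ≤ n) (l : Fin n → ℝ) :
    ∑ A ∈ powersetCard k (univ : Finset (Fin n)), ∑ j ∈ A, ∏ r ∈ A.erase j, l r
      = ((n - k + 1 : ℕ) : ℝ) * ∑ B ∈ powersetCard (k-1) (univ : Finset (Fin n)), ∏ r ∈ B, l r := by
  have h1 : ∑ A ∈ powersetCard k (univ : Finset (Fin n)), ∑ j ∈ A, ∏ r ∈ A.erase j, l r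
      = ∑ p ∈ (powersetCard k (univ : Finset (Fin n))).sigma (fun A => A),
          ∏ r ∈ p.1.erase p.2, l r :=
    Finset.sum_sigma' (powersetCard k (univ : Finset (Fin n))) (fun A => A)
      (fun A j => ∏ r ∈ A.erase j, l r)
  have h2 : ∑ B ∈ powersetCard (k-1) (univ : Finset (Fin n)), ∑ j ∈ Bᶜ, ∏ r ∈ B, l r
      = ∑ p ∈ (powersetCard (k-1) (univ : Finset (Fin n))).sigma (fun B => Bᶜ),
          ∏ r ∈ p.1, l r :=
    Finset.sum_sigma' (powersetCard (k-1) (univ : Finset (Fin n))) (fun B => Bᶜ)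
      (fun B _ => ∏ r ∈ B, l r)
  have h3 : ∑ p ∈ (powersetCard k (univ : Finset (Fin n))).sigma (fun A => A),
          ∏ r ∈ p.1.erase p.2, l r
      = ∑ p ∈ (powersetCard (k-1) (univ : Finset (Fin n))).sigma (fun B => Bᶜ),
          ∏ r ∈ p.1, l r := by
    refine Finset.sum_nbij' (fun p => ⟨p.1.erase p.2, p.2⟩) (fun p => ⟨insert p.2 p.1, p.2⟩)
      ?_ ?_ ?_ ?_ ?_
    · rintro ⟨A, j⟩ hp
      rw [Finset.mem_sigma] at hp ⊢
      obtain ⟨hA, hj⟩ := hp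
      rw [mem_powersetCard_univ] at hA ⊢
      exact ⟨by rw [Finset.card_erase_of_mem hj, hA], by simp⟩
    · rintro ⟨B, j⟩ hp
      rw [Finset.mem_sigma] at hp ⊢
      obtain ⟨hB, hj⟩ := hp
      rw [mem_powersetCard_univ] at hB ⊢
      rw [Finset.mem_compl] at hj
      exact ⟨by rw [Finset.card_insert_of_notMem hj, hB]; omega, Finset.mem_insert_self _ _⟩
    · rintro ⟨A, j⟩ hp
      rw [Finset.mem_sigma] at hp
      simp only [Sigma.mk.inj_iff, heq_eq_eq]
      exact ⟨Finset.insert_erase hp.2, trivial⟩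
    · rintro ⟨B, j⟩ hp
      rw [Finset.mem_sigma] at hp
      simp only [Sigma.mk.inj_iff, heq_eq_eq]
      exact ⟨Finset.erase_insert (Finset.mem_compl.1 hp.2), trivial⟩
    · rintro ⟨A, j⟩ _; rfl
  rw [h1, h3, ← h2]
  rw [Finset.mul_sum]
  refine Finset.sum_congr rfl fun B hB => ?_
  rw [Finset.sum_const, nsmul_eq_mul]
  rw [mem_powersetCard_univ] at hB
  have : Bᶜ.card = n - k + 1 := by
    rw [Finset.card_compl, hB, Fintype.card_fin]; omega
  rw [this]


theorem stmt_11 (n k : ℕ) (hk : 1 ≤ k) (hkn : k ≤ n)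
    (l : Fin n → ℝ) (hl : ∀ i, 0 < l i) :
    (k : ℝ) * ((∑ A ∈ powersetCard k (univ : Finset (Fin n)), ∏ i ∈ A, l i) /
        (n.choose k : ℝ)) ^ (((k : ℝ) - 1) / k) ≤
      ∑ i : Fin n,
        fderiv ℝ
          (fun m : Fin n → ℝ =>
            (∑ A ∈ powersetCard k (univ : Finset (Fin n)), ∏ j ∈ A, m j) / (n.choose k : ℝ))
          l (Pi.single i 1) := by
  set c : ℝ := (n.choose k : ℝ) with hc
  have hcpos : 0 < c := by rw [hc]; exact_mod_cast Nat.choose_pos hkn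
  -- compute the derivative
  have hder : HasFDerivAt
      (fun m : Fin n → ℝ =>
        (∑ A ∈ powersetCard k (univ : Finset (Fin n)), ∏ j ∈ A, m j) / c)
      (c⁻¹ • ∑ A ∈ powersetCard k (univ : Finset (Fin n)),
        ∑ i ∈ A, (∏ j ∈ A.erase i, l j) • ContinuousLinearMap.proj (R := ℝ) (φ := fun _ : Fin n => ℝ) i) l := by
    have hsum : HasFDerivAt
        (fun m : Fin n → ℝ => ∑ A ∈ powersetCard k (univ : Finset (Fin n)), ∏ j ∈ A, m j)
        (∑ A ∈ powersetCard k (univ : Finset (Fin n)),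
          ∑ i ∈ A, (∏ j ∈ A.erase i, l j) • ContinuousLinearMap.proj (R := ℝ) (φ := fun _ : Fin n => ℝ) i) l :=
      HasFDerivAt.fun_sum (fun A _ => hasFDerivAt_finset_prod)
    have h9 := hsum.const_mul c⁻¹
    have heq : (fun m : Fin n → ℝ =>
        (∑ A ∈ powersetCard k (univ : Finset (Fin n)), ∏ j ∈ A, m j) / c)
        = (fun m : Fin n → ℝ =>
          c⁻¹ * ∑ A ∈ powersetCard k (univ : Finset (Fin n)), ∏ j ∈ A, m j) := by
      funext m; rw [div_eq_inv_mul]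
    rw [heq]
    exact h9
  have hfd : ∀ i : Fin n, fderiv ℝ
      (fun m : Fin n → ℝ =>
        (∑ A ∈ powersetCard k (univ : Finset (Fin n)), ∏ j ∈ A, m j) / c) l (Pi.single i 1)
      = c⁻¹ * ∑ A ∈ powersetCard k (univ : Finset (Fin n)),
          ∑ j ∈ A, (∏ r ∈ A.erase j, l r) * ((Pi.single i 1 : Fin n → ℝ) j) := by
    intro i
    rw [hder.fderiv]
    simp [ContinuousLinearMap.sum_apply, ContinuousLinearMap.smul_apply,
      ContinuousLinearMap.proj_apply, smul_eq_mul]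
  rw [Finset.sum_congr rfl (fun i _ => hfd i)]
  rw [← Finset.mul_sum, Finset.sum_comm]
  have hswap : ∀ A ∈ powersetCard k (univ : Finset (Fin n)),
      (∑ i : Fin n, ∑ j ∈ A, (∏ r ∈ A.erase j, l r) * ((Pi.single i 1 : Fin n → ℝ) j))
        = ∑ j ∈ A, ∏ r ∈ A.erase j, l r := by
    intro A _
    rw [Finset.sum_comm]
    refine Finset.sum_congr rfl fun j _ => ?_
    rw [← Finset.mul_sum]
    have : (∑ i : Fin n, (Pi.single i 1 : Fin n → ℝ) j) = 1 := by
      simp [Pi.single_apply]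
    rw [this, mul_one]
  rw [Finset.sum_congr rfl hswap, my_sum_erase hk hkn l]
  -- now the right side is c⁻¹ * ((n-k+1) * e_{k-1})
  set E1 : ℝ := ∑ B ∈ powersetCard (k-1) (univ : Finset (Fin n)), ∏ r ∈ B, l r with hE1
  set Ek : ℝ := ∑ A ∈ powersetCard k (univ : Finset (Fin n)), ∏ i ∈ A, l i with hEk
  have hc1pos : (0:ℝ) < (n.choose (k-1) : ℝ) := by
    exact_mod_cast Nat.choose_pos (by omega : k - 1 ≤ n)
  have hE1pos : 0 < E1 := by
    rw [hE1]
    apply Finset.sum_pos (fun B _ => Finset.prod_pos fun r _ => hl r)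
    exact Finset.powersetCard_nonempty.2 (by simp; omega)
  have hEkpos : 0 < Ek := by
    rw [hEk]
    apply Finset.sum_pos (fun B _ => Finset.prod_pos fun r _ => hl r)
    exact Finset.powersetCard_nonempty.2 (by simp; omega)
  have hS : ∀ m : ℕ, ((univ : Finset (Fin n)).val.map l).esymm m
      = ∑ B ∈ powersetCard m (univ : Finset (Fin n)), ∏ r ∈ B, l r :=
    fun m => Finset.esymm_map_val l univ m
  have hmac := my_maclaurin' k hk n hkn ((univ : Finset (Fin n)).val.map l)
    (by simp) (fun x hx => by
      obtain ⟨i, _, rfl⟩ := Multiset.mem_map.1 hx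
      exact hl i)
  rw [hS k, hS (k-1)] at hmac
  -- hmac : (Ek / c) ^ (k-1) ≤ (E1 / choose (k-1)) ^ k
  set y : ℝ := E1 / (n.choose (k-1) : ℝ) with hy
  have hxpos : 0 < Ek / c := div_pos hEkpos hcpos
  have hypos : 0 < y := div_pos hE1pos hc1pos
  have hkR : (0:ℝ) < k := by exact_mod_cast hk
  have hrpow : (Ek / c) ^ (((k:ℝ) - 1) / (k:ℝ)) ≤ y := by
    have h1 : ((k:ℝ) - 1) / (k:ℝ) = (((k-1 : ℕ)):ℝ) * ((k:ℝ))⁻¹ := by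
      rw [Nat.cast_sub hk]
      push_cast
      ring
    rw [h1, Real.rpow_mul hxpos.le, Real.rpow_natCast]
    calc ((Ek / c) ^ (k-1)) ^ ((k:ℝ))⁻¹
        ≤ (y ^ k) ^ ((k:ℝ))⁻¹ :=
          Real.rpow_le_rpow (by positivity) hmac (by positivity)
      _ = y := by
          rw [← Real.rpow_natCast y k, ← Real.rpow_mul hypos.le,
            mul_inv_cancel₀ hkR.ne', Real.rpow_one]
  calc (k:ℝ) * (Ek / c) ^ (((k:ℝ) - 1) / (k:ℝ))
      ≤ (k:ℝ) * y := by
        exact mul_le_mul_of_nonneg_left hrpow (by positivity)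
    _ = c⁻¹ * (((n - k + 1 : ℕ):ℝ) * E1) := by
        have hnat : n.choose k * k = n.choose (k-1) * (n - k + 1) := by
          have h2 := Nat.choose_succ_right_eq n (k-1)
          rw [(by omega : k - 1 + 1 = k)] at h2
          rw [h2, (by omega : n - (k-1) = n - k + 1)]
        have hnatR : c * (k:ℝ) = (n.choose (k-1) : ℝ) * ((n - k + 1 : ℕ):ℝ) := by
          rw [hc]
          exact_mod_cast congrArg (fun x : ℕ => (x:ℝ)) hnat
        have hcast : ((n - k + 1 : ℕ):ℝ) = (n:ℝ) - (k:ℝ) + 1 := by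
          push_cast [Nat.cast_sub hkn]
          ring
        rw [hcast] at hnatR
        rw [hy, hcast]
        rw [eq_comm, inv_mul_eq_div, mul_div_assoc', div_eq_div_iff hcpos.ne' hc1pos.ne']
        linear_combination -E1 * hnatR
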